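/- arXiv:1410.6908 — 3 statements merged into one kernel-verified Lean document; each statement's English description precedes it below -/
import Mathlib

section
/- Let F : A → B be a functor between abelian categories with F(0) = 0. For objects X₁, …, Xₙ of A with X = X₁ ⊕ ⋯ ⊕ Xₙ, let e_i ∈ End(X) be the idempotent projecting onto X_i, and for S ⊆ {1,…,n} let e_S = Σ_{i∈S} e_i. Then the endomorphism cr_n := Σ_{S ⊆ {1,…,n}} (−1)^{n−|S|} F(e_S) of F(X) is idempotent. -/
open CategoryTheory CategoryTheory.Limits ZeroObject
attribute [local instance] CategoryTheory.Abelian.hasFiniteBiproducts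

/-! Since the `e_i` are orthogonal idempotents, `g S := F(e_S)` satisfies `g S * g T = g (S ∩ T)`
even though `F` need not be additive. Put `a := Σ_S (-1)^|S| g S`. If `i ∉ T`, the terms of
`a * g T` indexed by `S` and `insert i S` cancel, so `a * g T = 0` unless `T` is everything, in
which case it is `a`. Hence `a * a = (-1)^n a`, and `cr = (-1)^n a` is idempotent. -/

open Finset

lemma OrthogonalIdempotents.sum_mul_sum {R I : Type*} [Semiring R] [DecidableEq I] {e : I → R}
    (he : OrthogonalIdempotents e) (s t : Finset I) :
    (∑ i ∈ s, e i) * ∑ j ∈ t, e j = ∑ i ∈ s ∩ t, e i :=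
  calc (∑ i ∈ s, e i) * ∑ j ∈ t, e j = ∑ i ∈ s, if i ∈ t then e i else 0 := by
        rw [sum_mul]
        refine sum_congr rfl fun i _ => ?_
        split_ifs with hi
        · exact he.mul_sum_of_mem hi
        · exact he.mul_sum_of_notMem hi
    _ = ∑ i ∈ s ∩ t, e i := sum_ite_mem s t e

lemma CategoryTheory.Limits.biproduct.orthogonalIdempotents_π_comp_ι {C J : Type*} [Category C]
    [Preadditive C] (f : J → C) [HasBiproduct f] :
    OrthogonalIdempotents (R := End (⨁ f)) fun j => biproduct.π f j ≫ biproduct.ι f j := by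
  classical
  refine OrthogonalIdempotents.iff_mul_eq.2 fun i j => ?_
  by_cases h : i = j
  · subst h
    simp [End.mul_def]
  · simp [End.mul_def, biproduct.ι_π_ne_assoc _ (Ne.symm h), h]

section AlternatingSum

variable {ι : Type*} [Fintype ι] [DecidableEq ι]

lemma Finset.sum_neg_one_pow_card_smul_eq_zero {M : Type*} [AddCommGroup M] {f : Finset ι → M}
    {i : ι} (hf : ∀ S, f (insert i S) = f S) : ∑ S, (-1 : ℤ) ^ #S • f S = 0 := by
  rw [← powerset_univ, ← insert_erase (mem_univ i), sum_powerset_insert (notMem_erase i univ),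
    ← sum_add_distrib]
  refine sum_eq_zero fun S hS => ?_
  have hiS : i ∉ S := fun h => notMem_erase i univ (mem_powerset.1 hS h)
  rw [card_insert_of_notMem hiS, hf, pow_succ, mul_neg_one, neg_smul, add_neg_cancel]

lemma Finset.neg_one_pow_card_compl (S : Finset ι) :
    (-1 : ℤ) ^ #Sᶜ = (-1) ^ Fintype.card ι * (-1) ^ #S := by
  rw [← card_compl_add_card S, pow_add, mul_assoc, ← pow_add, ← two_mul, pow_mul, neg_one_sq,
    one_pow, mul_one]

variable {R : Type*} [Ring R] {g : Finset ι → R}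

lemma sum_neg_one_pow_card_smul_mul_eq_ite (hg : ∀ S T, g S * g T = g (S ∩ T)) (T : Finset ι) :
    (∑ S, (-1 : ℤ) ^ #S • g S) * g T = if T = univ then ∑ S, (-1 : ℤ) ^ #S • g S else 0 := by
  simp only [sum_mul, smul_mul_assoc, hg]
  split_ifs with hT
  · simp [hT]
  · obtain ⟨i, hi⟩ : ∃ i, i ∉ T := by simpa [eq_univ_iff_forall] using hT
    exact sum_neg_one_pow_card_smul_eq_zero fun S => by rw [insert_inter_of_notMem hi]

lemma sum_neg_one_pow_card_smul_mul_self (hg : ∀ S T, g S * g T = g (S ∩ T)) :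
    (∑ S, (-1 : ℤ) ^ #S • g S) * ∑ S, (-1 : ℤ) ^ #S • g S
      = (-1 : ℤ) ^ Fintype.card ι • ∑ S, (-1 : ℤ) ^ #S • g S := by
  simp only [mul_sum (s := univ), mul_smul_comm, sum_neg_one_pow_card_smul_mul_eq_ite hg]
  simp

lemma isIdempotentElem_sum_neg_one_pow_card_compl_smul (hg : ∀ S T, g S * g T = g (S ∩ T)) :
    IsIdempotentElem (∑ S, (-1 : ℤ) ^ #Sᶜ • g S) := by
  have hsum : ∑ S, (-1 : ℤ) ^ #Sᶜ • g S
      = (-1 : ℤ) ^ Fintype.card ι • ∑ S, (-1 : ℤ) ^ #S • g S := by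
    simp only [neg_one_pow_card_compl, smul_sum, smul_smul]
  rw [IsIdempotentElem, hsum, smul_mul_smul_comm, sum_neg_one_pow_card_smul_mul_self hg, smul_smul,
    ← pow_add, Even.neg_one_pow ⟨_, rfl⟩, one_mul]

end AlternatingSum

theorem cross_effect_idempotent_is_idempotent_general
    {A B : Type*} [Category A] [Category B] [Abelian A] [Abelian B]
    (F : A ⥤ B)
    {n : ℕ} (X : Fin n → A)
    (e : Fin n → End (⨁ X)) (he : ∀ i, e i = biproduct.π X i ≫ biproduct.ι X i)
    (cr : End (F.obj (⨁ X)))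
    (hcr : cr = ∑ S : Finset (Fin n), ((-1 : ℤ) ^ (n - S.card)) • F.map (∑ i ∈ S, e i)) :
    cr ≫ cr = cr := by
  have hE : OrthogonalIdempotents e := by
    rw [funext he]
    exact biproduct.orthogonalIdempotents_π_comp_ι X
  have hg : ∀ S T : Finset (Fin n), F.mapEnd _ (∑ i ∈ S, e i) * F.mapEnd _ (∑ i ∈ T, e i)
      = F.mapEnd _ (∑ i ∈ S ∩ T, e i) := fun S T => by
    rw [← map_mul, hE.sum_mul_sum]
  have hidem := (isIdempotentElem_sum_neg_one_pow_card_compl_smul hg).eq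
  simp only [card_compl, Fintype.card_fin, Functor.mapEnd_apply] at hidem
  subst hcr
  exact hidem

/-- For a functor `F : A ⥤ B` between abelian categories with `F(0) = 0`,
and objects `X₁, …, Xₙ` with `X = X₁ ⊕ ⋯ ⊕ Xₙ`, the endomorphism
`crₙ = Σ_{S ⊆ {1,…,n}} (−1)^{n−|S|} F(e_S)` of `F(X)` is idempotent, where
`e_i` is the idempotent of `X` projecting onto `X_i` and `e_S = Σ_{i ∈ S} e_i`. -/
theorem cross_effect_idempotent_is_idempotent
    {A B : Type*} [Category A] [Category B] [Abelian A] [Abelian B]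
    (F : A ⥤ B) (hF : IsZero (F.obj (0 : A)))
    {n : ℕ} (X : Fin n → A)
    (e : Fin n → End (⨁ X)) (he : ∀ i, e i = biproduct.π X i ≫ biproduct.ι X i)
    (cr : End (F.obj (⨁ X)))
    (hcr : cr = ∑ S : Finset (Fin n), ((-1 : ℤ) ^ (n - S.card)) • F.map (∑ i ∈ S, e i)) :
    cr ≫ cr = cr :=
  cross_effect_idempotent_is_idempotent_general F X e he cr hcr
end

section
/- Let F : A → B be a functor between abelian categories with F(0) = 0, and define the second cross effect F₂(X,Y) as the image of the idempotent F(e₁ + e₂) − F(e₁) − F(e₂) on F(X ⊕ Y). Then there is an isomorphism F(X ⊕ Y) ≅ F(X) ⊕ F(Y) ⊕ F₂(X,Y), natural in X and Y. -/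
open CategoryTheory CategoryTheory.Limits ZeroObject
attribute [local instance] CategoryTheory.Abelian.hasFiniteBiproducts

variable {A B : Type*} [Category A] [Category B] [Abelian A] [Abelian B]

/-- The idempotent `F(e₁ + e₂) − F(e₁) − F(e₂)` on `F(X ⊕ Y)`, where `e₁, e₂` are the
canonical idempotents of `X ⊕ Y` with images `X` and `Y`. -/
noncomputable def secondCrossIdem (F : A ⥤ B) (X Y : A) :
    F.obj (X ⊞ Y) ⟶ F.obj (X ⊞ Y) :=
  F.map (biprod.fst ≫ biprod.inl + biprod.snd ≫ biprod.inr)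
    - F.map (biprod.fst ≫ biprod.inl) - F.map (biprod.snd ≫ biprod.inr)

section aux
variable (F : A ⥤ B) (hF : IsZero (F.obj (0 : A)))
include hF

lemma myMapZero {X Y : A} : F.map (0 : X ⟶ Y) = 0 := by
  have h : (0 : X ⟶ Y) = (0 : X ⟶ (0:A)) ≫ (0 : (0:A) ⟶ Y) := by simp
  rw [h, F.map_comp]
  have h2 : F.map (0 : X ⟶ (0:A)) = 0 := hF.eq_zero_of_tgt _
  rw [h2, zero_comp]

omit hF in
lemma sci_eq (X Y : A) : secondCrossIdem F X Y
    = 𝟙 _ - F.map (biprod.fst ≫ biprod.inl) - F.map (biprod.snd ≫ biprod.inr) := by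
  rw [secondCrossIdem, biprod.total, F.map_id]

omit hF in
lemma p1_idem (X Y : A) :
    F.map (biprod.fst ≫ biprod.inl : X ⊞ Y ⟶ X ⊞ Y) ≫ F.map (biprod.fst ≫ biprod.inl : X ⊞ Y ⟶ X ⊞ Y) =
      F.map (biprod.fst ≫ biprod.inl : X ⊞ Y ⟶ X ⊞ Y) := by
  rw [← F.map_comp]; congr 1; simp

omit hF in
lemma p2_idem (X Y : A) :
    F.map (biprod.snd ≫ biprod.inr : X ⊞ Y ⟶ X ⊞ Y) ≫ F.map (biprod.snd ≫ biprod.inr : X ⊞ Y ⟶ X ⊞ Y) =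
      F.map (biprod.snd ≫ biprod.inr : X ⊞ Y ⟶ X ⊞ Y) := by
  rw [← F.map_comp]; congr 1; simp

lemma p12 (X Y : A) :
    F.map (biprod.fst ≫ biprod.inl : X ⊞ Y ⟶ X ⊞ Y) ≫ F.map (biprod.snd ≫ biprod.inr : X ⊞ Y ⟶ X ⊞ Y) = 0 := by
  rw [← F.map_comp]
  have : (biprod.fst ≫ biprod.inl : X ⊞ Y ⟶ X ⊞ Y) ≫ (biprod.snd ≫ biprod.inr : X ⊞ Y ⟶ X ⊞ Y) = 0 := by simp
  rw [this, myMapZero F hF]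

lemma p21 (X Y : A) :
    F.map (biprod.snd ≫ biprod.inr : X ⊞ Y ⟶ X ⊞ Y) ≫ F.map (biprod.fst ≫ biprod.inl : X ⊞ Y ⟶ X ⊞ Y) = 0 := by
  rw [← F.map_comp]
  have : (biprod.snd ≫ biprod.inr : X ⊞ Y ⟶ X ⊞ Y) ≫ (biprod.fst ≫ biprod.inl : X ⊞ Y ⟶ X ⊞ Y) = 0 := by simp
  rw [this, myMapZero F hF]

lemma sci_idem (X Y : A) :
    secondCrossIdem F X Y ≫ secondCrossIdem F X Y = secondCrossIdem F X Y := by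
  rw [sci_eq]
  simp only [Preadditive.sub_comp, Preadditive.comp_sub, Category.id_comp, Category.comp_id,
    p1_idem, p2_idem, p12 F hF, p21 F hF]
  abel

lemma inl_sci (X Y : A) :
    F.map (biprod.inl : X ⟶ X ⊞ Y) ≫ secondCrossIdem F X Y = 0 := by
  rw [sci_eq]
  simp only [Preadditive.comp_sub, Category.comp_id, ← F.map_comp]
  have h1 : (biprod.inl : X ⟶ X ⊞ Y) ≫ (biprod.fst ≫ biprod.inl : X ⊞ Y ⟶ X ⊞ Y) = biprod.inl := by simp
  have h2 : (biprod.inl : X ⟶ X ⊞ Y) ≫ (biprod.snd ≫ biprod.inr : X ⊞ Y ⟶ X ⊞ Y) = 0 := by simp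
  rw [h1, h2, myMapZero F hF]
  abel

lemma inr_sci (X Y : A) :
    F.map (biprod.inr : Y ⟶ X ⊞ Y) ≫ secondCrossIdem F X Y = 0 := by
  rw [sci_eq]
  simp only [Preadditive.comp_sub, Category.comp_id, ← F.map_comp]
  have h1 : (biprod.inr : Y ⟶ X ⊞ Y) ≫ (biprod.snd ≫ biprod.inr : X ⊞ Y ⟶ X ⊞ Y) = biprod.inr := by simp
  have h2 : (biprod.inr : Y ⟶ X ⊞ Y) ≫ (biprod.fst ≫ biprod.inl : X ⊞ Y ⟶ X ⊞ Y) = 0 := by simp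
  rw [h1, h2, myMapZero F hF]
  abel

lemma sci_fst (X Y : A) :
    secondCrossIdem F X Y ≫ F.map (biprod.fst : X ⊞ Y ⟶ X) = 0 := by
  have hmono : F.map (biprod.inl : X ⟶ X ⊞ Y) ≫ F.map (biprod.fst : X ⊞ Y ⟶ X) = 𝟙 _ := by
    rw [← F.map_comp]; simp
  have : (secondCrossIdem F X Y ≫ F.map (biprod.fst : X ⊞ Y ⟶ X)) ≫ F.map (biprod.inl : X ⟶ X ⊞ Y) = 0 := by
    rw [Category.assoc, ← F.map_comp]
    rw [sci_eq]
    simp only [Preadditive.sub_comp, Category.id_comp, ← F.map_comp]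
    have e1 : ((biprod.fst ≫ biprod.inl : X ⊞ Y ⟶ X ⊞ Y)) ≫ (biprod.fst ≫ biprod.inl : X ⊞ Y ⟶ X ⊞ Y) = biprod.fst ≫ biprod.inl := by simp
    have e2 : ((biprod.snd ≫ biprod.inr : X ⊞ Y ⟶ X ⊞ Y)) ≫ (biprod.fst ≫ biprod.inl : X ⊞ Y ⟶ X ⊞ Y) = 0 := by simp
    rw [e1, e2, myMapZero F hF]
    abel
  have hmono2 : Mono (F.map (biprod.inl : X ⟶ X ⊞ Y)) := by
    exact mono_of_mono_fac (show _ ≫ F.map biprod.fst = 𝟙 _ from hmono) -- maybe wrong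
  rw [← cancel_mono (F.map (biprod.inl : X ⟶ X ⊞ Y)), this, zero_comp]

lemma sci_snd (X Y : A) :
    secondCrossIdem F X Y ≫ F.map (biprod.snd : X ⊞ Y ⟶ Y) = 0 := by
  have hmono : F.map (biprod.inr : Y ⟶ X ⊞ Y) ≫ F.map (biprod.snd : X ⊞ Y ⟶ Y) = 𝟙 _ := by
    rw [← F.map_comp]; simp
  have : (secondCrossIdem F X Y ≫ F.map (biprod.snd : X ⊞ Y ⟶ Y)) ≫ F.map (biprod.inr : Y ⟶ X ⊞ Y) = 0 := by
    rw [Category.assoc, ← F.map_comp]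
    rw [sci_eq]
    simp only [Preadditive.sub_comp, Category.id_comp, ← F.map_comp]
    have e1 : ((biprod.snd ≫ biprod.inr : X ⊞ Y ⟶ X ⊞ Y)) ≫ (biprod.snd ≫ biprod.inr : X ⊞ Y ⟶ X ⊞ Y) = biprod.snd ≫ biprod.inr := by simp
    have e2 : ((biprod.fst ≫ biprod.inl : X ⊞ Y ⟶ X ⊞ Y)) ≫ (biprod.snd ≫ biprod.inr : X ⊞ Y ⟶ X ⊞ Y) = 0 := by simp
    rw [e1, e2, myMapZero F hF]
    abel
  have hmono2 : Mono (F.map (biprod.inr : Y ⟶ X ⊞ Y)) := by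
    exact mono_of_mono_fac (show _ ≫ F.map biprod.snd = 𝟙 _ from hmono)
  rw [← cancel_mono (F.map (biprod.inr : Y ⟶ X ⊞ Y)), this, zero_comp]

lemma sci_comm (X X' Y Y' : A) (f : X ⟶ X') (g : Y ⟶ Y') :
    secondCrossIdem F X Y ≫ F.map (biprod.map f g)
      = F.map (biprod.map f g) ≫ secondCrossIdem F X' Y' := by
  rw [sci_eq, sci_eq]
  simp only [Preadditive.sub_comp, Preadditive.comp_sub, Category.id_comp, Category.comp_id, ← F.map_comp]
  have e1 : (biprod.fst ≫ biprod.inl : X ⊞ Y ⟶ X ⊞ Y) ≫ biprod.map f g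
      = biprod.map f g ≫ (biprod.fst ≫ biprod.inl : X' ⊞ Y' ⟶ X' ⊞ Y') := by simp
  have e2 : (biprod.snd ≫ biprod.inr : X ⊞ Y ⟶ X ⊞ Y) ≫ biprod.map f g
      = biprod.map f g ≫ (biprod.snd ≫ biprod.inr : X' ⊞ Y' ⟶ X' ⊞ Y') := by simp
  rw [e1, e2]

end aux

/-- `F(X ⊕ Y) ≅ F(X) ⊕ F(Y) ⊕ F₂(X,Y)`, naturally in `X` and `Y`, where
`F₂(X,Y)` is the image of the idempotent `F(e₁+e₂) − F(e₁) − F(e₂)` on `F(X ⊕ Y)`. -/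
theorem second_cross_effect_decomposition (F : A ⥤ B) (hF : IsZero (F.obj (0 : A))) :
    ∃ iso : ∀ X Y : A,
        F.obj (X ⊞ Y) ≅ F.obj X ⊞ (F.obj Y ⊞ image (secondCrossIdem F X Y)),
      ∀ (X X' Y Y' : A) (f : X ⟶ X') (g : Y ⟶ Y')
        (h : image (secondCrossIdem F X Y) ⟶ image (secondCrossIdem F X' Y')),
        image.ι (secondCrossIdem F X Y) ≫ F.map (biprod.map f g)
            = h ≫ image.ι (secondCrossIdem F X' Y') →
        (iso X Y).hom ≫ biprod.map (F.map f) (biprod.map (F.map g) h)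
          = F.map (biprod.map f g) ≫ (iso X' Y').hom := by
  -- retract identities for image
  have retr : ∀ X Y : A, image.ι (secondCrossIdem F X Y) ≫ factorThruImage (secondCrossIdem F X Y) = 𝟙 _ := by
    intro X Y
    rw [← cancel_mono (image.ι (secondCrossIdem F X Y)), ← cancel_epi (factorThruImage (secondCrossIdem F X Y))]
    simp only [Category.assoc, image.fac, Category.id_comp, Category.comp_id]
    rw [← Category.assoc, image.fac, sci_idem F hF]
  have inl_pi : ∀ X Y : A, F.map (biprod.inl : X ⟶ X ⊞ Y) ≫ factorThruImage (secondCrossIdem F X Y) = 0 := by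
    intro X Y
    rw [← cancel_mono (image.ι (secondCrossIdem F X Y))]
    rw [Category.assoc, image.fac, inl_sci F hF, zero_comp]
  have inr_pi : ∀ X Y : A, F.map (biprod.inr : Y ⟶ X ⊞ Y) ≫ factorThruImage (secondCrossIdem F X Y) = 0 := by
    intro X Y
    rw [← cancel_mono (image.ι (secondCrossIdem F X Y))]
    rw [Category.assoc, image.fac, inr_sci F hF, zero_comp]
  have iota_fst : ∀ X Y : A, image.ι (secondCrossIdem F X Y) ≫ F.map (biprod.fst : X ⊞ Y ⟶ X) = 0 := by
    intro X Y
    rw [← cancel_epi (factorThruImage (secondCrossIdem F X Y)), ← Category.assoc, image.fac,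
      sci_fst F hF, comp_zero]
  have iota_snd : ∀ X Y : A, image.ι (secondCrossIdem F X Y) ≫ F.map (biprod.snd : X ⊞ Y ⟶ Y) = 0 := by
    intro X Y
    rw [← cancel_epi (factorThruImage (secondCrossIdem F X Y)), ← Category.assoc, image.fac,
      sci_snd F hF, comp_zero]
  refine ⟨fun X Y => ⟨biprod.lift (F.map biprod.fst)
      (biprod.lift (F.map biprod.snd) (factorThruImage (secondCrossIdem F X Y))),
    biprod.desc (F.map biprod.inl)
      (biprod.desc (F.map biprod.inr) (image.ι (secondCrossIdem F X Y))), ?_, ?_⟩, ?_⟩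
  · -- hom ≫ inv = 𝟙
    rw [biprod.lift_desc, biprod.lift_desc, image.fac, ← F.map_comp, ← F.map_comp, sci_eq]
    abel
  · have sci_pi : secondCrossIdem F X Y ≫ factorThruImage (secondCrossIdem F X Y)
        = factorThruImage (secondCrossIdem F X Y) := by
      rw [← cancel_mono (image.ι (secondCrossIdem F X Y)), Category.assoc, image.fac,
        sci_idem F hF]
    ext <;>
      simp [← F.map_comp, inl_pi X Y, inr_pi X Y, iota_fst X Y, iota_snd X Y, retr X Y,
        myMapZero F hF, sci_fst F hF X Y, sci_snd F hF X Y, sci_pi]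
  · intro X X' Y Y' f g h hcomm
    have key : factorThruImage (secondCrossIdem F X Y) ≫ h
        = F.map (biprod.map f g) ≫ factorThruImage (secondCrossIdem F X' Y') := by
      rw [← cancel_mono (image.ι (secondCrossIdem F X' Y'))]
      rw [Category.assoc, ← hcomm, ← Category.assoc, image.fac, Category.assoc, image.fac,
        sci_comm F hF]
    apply biprod.hom_ext
    · simp only [Category.assoc, biprod.map_fst, biprod.lift_fst, biprod.lift_fst_assoc,
        ← F.map_comp]
    · apply biprod.hom_ext
      · simp only [Category.assoc, biprod.map_snd, biprod.lift_snd, biprod.lift_snd_assoc,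
          biprod.map_fst, biprod.lift_fst, biprod.lift_fst_assoc, ← F.map_comp]
      · simp only [Category.assoc, biprod.map_snd, biprod.lift_snd, biprod.lift_snd_assoc,
          ← F.map_comp, key]
end

section
/- Let F : A → B be a functor with F(0) = 0 and let d ≥ 1. The following are equivalent: (1) the (d+1)-st cross effect F_{d+1} vanishes; (2) d = 1 and F is additive, or d > 1 and there exists a functor G : A × A → B of degree ≤ d−1 in each argument together with a natural decomposition F(X ⊕ Y) ≅ F(X) ⊕ F(Y) ⊕ G(X,Y). -/
open CategoryTheory CategoryTheory.Limits ZeroObject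
attribute [local instance] CategoryTheory.Abelian.hasFiniteBiproducts

variable {A B : Type*} [Category A] [Category B] [Abelian A] [Abelian B]

/-- The idempotent `crₙ = Σ_{S ⊆ {1,…,n}} (−1)^{n−|S|} F(e_S)` on `F(X₁ ⊕ ⋯ ⊕ Xₙ)`. -/
noncomputable def crIdem (F : A ⥤ B) {n : ℕ} (X : Fin n → A) :
    F.obj (⨁ X) ⟶ F.obj (⨁ X) :=
  ∑ S : Finset (Fin n), ((-1 : ℤ) ^ (n - S.card)) •
    F.map (∑ i ∈ S, biproduct.π X i ≫ biproduct.ι X i)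

/-- The `n`-th cross effect `Fₙ(X₁,…,Xₙ)`: the image of `crₙ` in `F(X₁ ⊕ ⋯ ⊕ Xₙ)`. -/
noncomputable def crossEffect (F : A ⥤ B) {n : ℕ} (X : Fin n → A) : B :=
  image (crIdem F X)

/-- `F` has degree `≤ d` (for `d ≥ 1`), defined recursively: degree `≤ 1` means additive
(the canonical map `F(X) ⊕ F(Y) → F(X ⊕ Y)` is an isomorphism); degree `≤ d` means that
there is a bifunctor `G` of degree `≤ d − 1` in each argument together with a natural
decomposition `F(X ⊕ Y) ≅ F(X) ⊕ F(Y) ⊕ G(X,Y)`.  (Degree `≤ 0` means `F = 0`.) -/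
def FunctorDegLE : ℕ → (A ⥤ B) → Prop
  | 0, F => ∀ X : A, IsZero (F.obj X)
  | 1, F => ∀ X Y : A,
      IsIso (biprod.desc (F.map (biprod.inl : X ⟶ X ⊞ Y)) (F.map (biprod.inr : Y ⟶ X ⊞ Y)))
  | (d+2), F => ∃ G : A × A ⥤ B,
      (∃ iso : ∀ X Y : A, F.obj (X ⊞ Y) ≅ F.obj X ⊞ (F.obj Y ⊞ G.obj (X, Y)),
        ∀ (X X' Y Y' : A) (f : X ⟶ X') (g : Y ⟶ Y'),
          (iso X Y).hom ≫ biprod.map (F.map f) (biprod.map (F.map g)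
              (G.map ((f, g) : (X, Y) ⟶ (X', Y'))))
            = F.map (biprod.map f g) ≫ (iso X' Y').hom) ∧
      (∀ X : A, FunctorDegLE (d+1) ((Functor.curry.obj G).obj X)) ∧
      (∀ Y : A, FunctorDegLE (d+1) ((Functor.curry.obj (CategoryTheory.Prod.swap A A ⋙ G)).obj Y))

/-!
The `n`-th cross-effect idempotent is an alternating sum
`deviation φ p = ∑_S (-1)^(n - |S|) φ (∑_{i ∈ S} p i)` with `φ = F.map` and `p` the summand
projections of `⨁ X`. Splitting off the last index turns an `(n+1)`-fold deviation of `φ` into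
the `n`-fold deviation of `e ↦ φ (e + p last) - φ e`, which on `Y ⊞ V` reads
`e ↦ F (e ⊕ 𝟙) - F (e ⊕ 0)`.

If `F (Y ⊞ V) ≅ F Y ⊞ F V ⊞ G (Y, V)` naturally, this difference only involves `F V`, which the
alternating signs kill, and `G (-, V)`; so vanishing cross effects of `G (-, V)` give vanishing
cross effects of `F` one order higher. Conversely, take for `G` the second cross effect, the image
of the idempotent `𝟙 - F (𝟙 ⊕ 0) - F (0 ⊕ 𝟙)` on `F (X ⊞ Y)`. Its cross effects in one variable
are deviations of `F.map` along families of idempotents of `U ⊞ ⨁ Z`, and these vanish as soon as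
all `crIdem F` do, because an object `P` with idempotents `p i` is a retract of `⨁ i, P`
compatibly with them.
-/

open Finset

theorem Fin.sum_finset_succ {M : Type*} [AddCommMonoid M] {n : ℕ} (f : Finset (Fin (n + 1)) → M) :
    ∑ S, f S = ∑ R : Finset (Fin n),
      (f (R.map Fin.castSuccEmb) + f (insert (Fin.last n) (R.map Fin.castSuccEmb))) := by
  rw [← powerset_univ, Fin.univ_castSuccEmb, cons_eq_insert, sum_powerset_insert (by simp),
    ← sum_add_distrib, map_eq_image, powerset_image, sum_image]
  · simp [map_eq_image]
  · exact fun _ _ _ _ h => image_injective Fin.castSuccEmb.injective h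

section Deviation

variable {M N : Type*} [AddCommMonoid M] [AddCommGroup N]

def deviation (φ : M → N) {n : ℕ} (p : Fin n → M) : N :=
  ∑ S : Finset (Fin n), (-1 : ℤ) ^ (n - #S) • φ (∑ i ∈ S, p i)

theorem deviation_zero (φ : M → N) (p : Fin 0 → M) : deviation φ p = φ 0 := by
  simp [deviation, Subsingleton.elim _ (∅ : Finset (Fin 0))]

theorem deviation_succ (φ : M → N) {n : ℕ} (p : Fin (n + 1) → M) :
    deviation φ p = deviation (fun e => φ (e + p (Fin.last n)) - φ e) (Fin.init p) := by
  rw [deviation, Fin.sum_finset_succ, deviation]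
  refine sum_congr rfl fun R _ => ?_
  have hR : #R ≤ n := by simpa using card_le_univ R
  have hsign : (-1 : ℤ) ^ (n + 1 - #R) = -(-1) ^ (n - #R) := by
    rw [Nat.sub_add_comm hR, pow_succ, mul_neg_one]
  rw [card_insert_of_notMem (by simp), sum_insert (by simp)]
  simp only [card_map, sum_map, Fin.castSuccEmb_apply, Nat.add_sub_add_right,
    hsign, neg_smul, smul_sub, Fin.init, add_comm (p (Fin.last n))]
  abel

theorem deviation_const (c : N) {n : ℕ} (p : Fin (n + 1) → M) :
    deviation (fun _ => c) p = 0 := by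
  rw [deviation_succ]
  simp [deviation]

theorem deviation_sub (φ ψ : M → N) {n : ℕ} (p : Fin n → M) :
    deviation (fun e => φ e - ψ e) p = deviation φ p - deviation ψ p := by
  simp only [deviation, smul_sub, sum_sub_distrib]

end Deviation

section Preadditive

variable {C D : Type*} [Category C] [Category D] [Preadditive C] [Preadditive D]

theorem deviation_comp {M : Type*} [AddCommMonoid M] {P Q R S : D} (a : P ⟶ Q)
    (ψ : M → (Q ⟶ R)) (b : R ⟶ S) {n : ℕ} (p : Fin n → M) :
    deviation (fun e => a ≫ ψ e ≫ b) p = a ≫ deviation ψ p ≫ b := by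
  simp only [deviation, Preadditive.comp_sum, Preadditive.sum_comp, Preadditive.comp_zsmul,
    Preadditive.zsmul_comp]

theorem deviation_conj {N : Type*} [AddCommGroup N] {P Q R S : C} (φ : (P ⟶ S) → N)
    (a : P ⟶ Q) (b : R ⟶ S) {n : ℕ} (p : Fin n → (Q ⟶ R)) :
    deviation φ (fun i => a ≫ p i ≫ b) = deviation (fun e => φ (a ≫ e ≫ b)) p := by
  simp only [deviation, ← Preadditive.comp_sum, ← Preadditive.sum_comp]

theorem deviation_map_conj (F : C ⥤ D) {P Q : C} (a : P ⟶ Q) (b : Q ⟶ P) {n : ℕ}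
    (p : Fin n → (Q ⟶ Q)) :
    deviation F.map (fun i => a ≫ p i ≫ b) = F.map a ≫ deviation F.map p ≫ F.map b := by
  simp only [deviation_conj, F.map_comp, deviation_comp]

theorem deviation_biprod_map [HasBinaryBiproducts D] {M : Type*} [AddCommMonoid M]
    {P Q R S : D} (φ : M → (P ⟶ R)) (ψ : M → (Q ⟶ S)) {n : ℕ} (p : Fin n → M) :
    deviation (fun e => biprod.map (φ e) (ψ e)) p
      = biprod.map (deviation φ p) (deviation ψ p) := by
  ext <;> simp [deviation, Preadditive.comp_sum, Preadditive.sum_comp]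

section Biprod

variable [HasBinaryBiproducts C]

theorem biprod.map_comp_map {X X' X'' Y Y' Y'' : C} (f : X ⟶ X') (f' : X' ⟶ X'')
    (g : Y ⟶ Y') (g' : Y' ⟶ Y'') :
    biprod.map f g ≫ biprod.map f' g' = biprod.map (f ≫ f') (g ≫ g') := by
  ext <;> simp

@[simp]
theorem biprod.map_zero_zero {X X' Y Y' : C} : biprod.map (0 : X ⟶ X') (0 : Y ⟶ Y') = 0 := by
  ext <;> simp

@[simp]
theorem biprod.map_id_id {X Y : C} : biprod.map (𝟙 X) (𝟙 Y) = 𝟙 (X ⊞ Y) := by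
  ext <;> simp

variable {N : Type*} [AddCommGroup N] {Y V : C}

theorem deviation_snoc_biprod_map_left (φ : (Y ⊞ V ⟶ Y ⊞ V) → N) {n : ℕ}
    (q : Fin n → (Y ⟶ Y)) :
    deviation φ (Fin.snoc (fun i => biprod.map (q i) (0 : V ⟶ V)) (biprod.map 0 (𝟙 V)))
      = deviation (fun e => φ (biprod.map e (𝟙 V)) - φ (biprod.map e 0)) q := by
  have h (e : Y ⟶ Y) : biprod.map e (0 : V ⟶ V) = biprod.fst ≫ e ≫ biprod.inl := by
    simp [biprod.map_eq]
  rw [deviation_succ, Fin.init_snoc, Fin.snoc_last]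
  simp only [h, deviation_conj]
  congr 1
  funext e
  congr 2
  simp [biprod.map_eq]

theorem deviation_snoc_biprod_map_right (φ : (V ⊞ Y ⟶ V ⊞ Y) → N) {n : ℕ}
    (q : Fin n → (Y ⟶ Y)) :
    deviation φ (Fin.snoc (fun i => biprod.map (0 : V ⟶ V) (q i)) (biprod.map (𝟙 V) 0))
      = deviation (fun e => φ (biprod.map (𝟙 V) e) - φ (biprod.map 0 e)) q := by
  have h (e : Y ⟶ Y) : biprod.map (0 : V ⟶ V) e = biprod.snd ≫ e ≫ biprod.inr := by
    simp [biprod.map_eq]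
  rw [deviation_succ, Fin.init_snoc, Fin.snoc_last]
  simp only [h, deviation_conj]
  congr 1
  funext e
  congr 2
  simp [biprod.map_eq, add_comm]

end Biprod

end Preadditive

section CrIdemBiprod

variable {C D : Type*} [Category C] [Category D] [Preadditive C] [Preadditive D]
  [HasBinaryBiproducts C] (F : C ⥤ D)

noncomputable def crIdemBiprod (X Y : C) : F.obj (X ⊞ Y) ⟶ F.obj (X ⊞ Y) :=
  𝟙 _ - F.map (biprod.map (𝟙 X) 0) - F.map (biprod.map 0 (𝟙 Y))

theorem map_biprod_map_comp_crIdemBiprod {X X' Y Y' : C} (f : X ⟶ X') (g : Y ⟶ Y') :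
    F.map (biprod.map f g) ≫ crIdemBiprod F X' Y'
      = F.map (biprod.map f g) - F.map (biprod.map f 0) - F.map (biprod.map 0 g) := by
  simp [crIdemBiprod, Preadditive.comp_sub, ← F.map_comp, biprod.map_comp_map]

theorem crIdemBiprod_comp_map_biprod_map {X X' Y Y' : C} (f : X ⟶ X') (g : Y ⟶ Y') :
    crIdemBiprod F X Y ≫ F.map (biprod.map f g)
      = F.map (biprod.map f g) - F.map (biprod.map f 0) - F.map (biprod.map 0 g) := by
  simp [crIdemBiprod, Preadditive.sub_comp, ← F.map_comp, biprod.map_comp_map]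

theorem crIdemBiprod_naturality {X X' Y Y' : C} (f : X ⟶ X') (g : Y ⟶ Y') :
    F.map (biprod.map f g) ≫ crIdemBiprod F X' Y'
      = crIdemBiprod F X Y ≫ F.map (biprod.map f g) := by
  rw [map_biprod_map_comp_crIdemBiprod, crIdemBiprod_comp_map_biprod_map]

variable [F.PreservesZeroMorphisms]

theorem crIdemBiprod_idem (X Y : C) :
    crIdemBiprod F X Y ≫ crIdemBiprod F X Y = crIdemBiprod F X Y := by
  nth_rw 1 [crIdemBiprod]
  rw [Preadditive.sub_comp, Preadditive.sub_comp, Category.id_comp,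
    map_biprod_map_comp_crIdemBiprod, map_biprod_map_comp_crIdemBiprod]
  simp

theorem map_inl_comp_crIdemBiprod (X Y : C) : F.map biprod.inl ≫ crIdemBiprod F X Y = 0 := by
  simp [crIdemBiprod, Preadditive.comp_sub, ← F.map_comp]

theorem map_inr_comp_crIdemBiprod (X Y : C) : F.map biprod.inr ≫ crIdemBiprod F X Y = 0 := by
  simp [crIdemBiprod, Preadditive.comp_sub, ← F.map_comp]

theorem crIdemBiprod_comp_map_fst (X Y : C) : crIdemBiprod F X Y ≫ F.map biprod.fst = 0 := by
  simp [crIdemBiprod, Preadditive.sub_comp, ← F.map_comp]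

theorem crIdemBiprod_comp_map_snd (X Y : C) : crIdemBiprod F X Y ≫ F.map biprod.snd = 0 := by
  simp [crIdemBiprod, Preadditive.sub_comp, ← F.map_comp]

theorem crIdemBiprod_zero_left [HasZeroObject C] (Y : C) : crIdemBiprod F 0 Y = 0 := by
  have h : biprod.map (0 : (0 : C) ⟶ 0) (𝟙 Y) = 𝟙 _ := by
    apply biprod.hom_ext'
    · exact (isZero_zero C).eq_of_src _ _
    · simp
  simp [crIdemBiprod, h]

theorem crIdemBiprod_zero_right [HasZeroObject C] (X : C) : crIdemBiprod F X 0 = 0 := by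
  have h : biprod.map (𝟙 X) (0 : (0 : C) ⟶ 0) = 𝟙 _ := by
    apply biprod.hom_ext'
    · simp
    · exact (isZero_zero C).eq_of_src _ _
  simp [crIdemBiprod, h]

theorem isIso_biprodComparison'_iff [HasBinaryBiproducts D] (X Y : C) :
    IsIso (F.biprodComparison' X Y) ↔ crIdemBiprod F X Y = 0 := by
  have h : F.biprodComparison X Y ≫ F.biprodComparison' X Y
      = F.map (biprod.map (𝟙 X) 0) + F.map (biprod.map 0 (𝟙 Y)) := by
    rw [Functor.biprodComparison, Functor.biprodComparison', biprod.lift_desc, ← F.map_comp,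
      ← F.map_comp]
    congr 2 <;> simp [biprod.map_eq]
  rw [crIdemBiprod, sub_sub, sub_eq_zero, ← h]
  constructor
  · intro _
    rw [← IsIso.inv_eq_of_hom_inv_id (F.biprodComparison'_comp_biprodComparison X Y),
      IsIso.inv_hom_id]
  · exact fun h => ⟨⟨_, F.biprodComparison'_comp_biprodComparison X Y, h.symm⟩⟩

theorem deviation_map_biprod_map_fin_one {Y V : C} (q : Fin 1 → (Y ⟶ Y)) :
    deviation (fun e => F.map (biprod.map e (𝟙 V)) - F.map (biprod.map e 0)) q
      = F.map (biprod.map (q 0) (𝟙 V)) ≫ crIdemBiprod F Y V := by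
  rw [deviation_succ, deviation_zero, map_biprod_map_comp_crIdemBiprod]
  simp [Fin.last]

end CrIdemBiprod

theorem preservesZeroMorphisms_of_isIso_biprodComparison' {C D : Type*} [Category C]
    [Category D] [Preadditive C] [Preadditive D] [HasBinaryBiproducts C] [HasBinaryBiproducts D]
    [HasZeroObject C] [HasZeroObject D] (F : C ⥤ D)
    (h : ∀ X Y : C, IsIso (F.biprodComparison' X Y)) : F.PreservesZeroMorphisms := by
  refine Functor.preservesZeroMorphisms_of_map_zero_object (IsZero.isoZero ?_)
  have hinl : (biprod.inl : F.obj 0 ⟶ F.obj 0 ⊞ F.obj 0) = biprod.inr := by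
    rw [← cancel_mono (F.biprodComparison' 0 0), Functor.inl_biprodComparison',
      Functor.inr_biprodComparison']
    congr 1
    exact (isZero_zero C).eq_of_src _ _
  rw [IsZero.iff_id_eq_zero]
  simpa using hinl =≫ biprod.fst

section IdempotentImage

variable {C : Type*} [Category C] [HasImages C] {T : C} {e : T ⟶ T}

theorem image_ι_comp_of_idem [HasEqualizers C] (he : e ≫ e = e) :
    image.ι e ≫ e = image.ι e := by
  rw [← cancel_epi (factorThruImage e), image.fac_assoc, he, image.fac]

theorem comp_factorThruImage_of_idem (he : e ≫ e = e) :
    e ≫ factorThruImage e = factorThruImage e := by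
  rw [← cancel_mono (image.ι e), Category.assoc, image.fac, he]

theorem image_ι_comp_factorThruImage_of_idem [HasEqualizers C] (he : e ≫ e = e) :
    image.ι e ≫ factorThruImage e = 𝟙 _ := by
  rw [← cancel_mono (image.ι e), Category.assoc, image.fac, image_ι_comp_of_idem he,
    Category.id_comp]

end IdempotentImage

theorem isZero_image_iff {C : Type*} [Category C] [HasZeroMorphisms C] [HasZeroObject C]
    [HasEqualizers C] {X Y : C} (f : X ⟶ Y) [HasImage f] : IsZero (image f) ↔ f = 0 :=
  ⟨fun h => by rw [← image.fac f, h.eq_zero_of_tgt (factorThruImage f), zero_comp],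
    fun h => IsZero.of_mono_eq_zero _ (image.ι_zero' h)⟩

theorem crIdem_eq_deviation (F : A ⥤ B) {n : ℕ} (X : Fin n → A) :
    crIdem F X = deviation F.map (fun i => biproduct.π X i ≫ biproduct.ι X i) := rfl

theorem deviation_map_eq_zero_of_crIdem_eq_zero (F : A ⥤ B) {n : ℕ}
    (h : ∀ X : Fin n → A, crIdem F X = 0) {P : A} (p : Fin n → (P ⟶ P))
    (hp : ∀ i, p i ≫ p i = p i) : deviation F.map p = 0 := by
  have hp' : p = fun i => biproduct.lift p ≫
      (biproduct.π (fun _ => P) i ≫ biproduct.ι (fun _ => P) i) ≫ biproduct.desc p := by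
    funext i
    simp [hp]
  rw [hp', deviation_map_conj, ← crIdem_eq_deviation, h, zero_comp, comp_zero]

theorem exists_crIdem_eq_comp_deviation (F : A ⥤ B) {n : ℕ} (X : Fin (n + 1) → A) :
    ∃ (u : ⨁ X ⟶ (⨁ X ∘ Fin.castSucc) ⊞ X (Fin.last n))
      (v : (⨁ X ∘ Fin.castSucc) ⊞ X (Fin.last n) ⟶ ⨁ X),
      crIdem F X = F.map u ≫
        deviation (fun e => F.map (biprod.map e (𝟙 _)) - F.map (biprod.map e 0))
          (fun i => biproduct.π (X ∘ Fin.castSucc) i ≫ biproduct.ι (X ∘ Fin.castSucc) i) ≫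
        F.map v := by
  refine ⟨biprod.lift (biproduct.lift fun i : Fin n => biproduct.π X i.castSucc)
      (biproduct.π X (Fin.last n)),
    biprod.desc (biproduct.desc fun i : Fin n => biproduct.ι X i.castSucc)
      (biproduct.ι X (Fin.last n)), ?_⟩
  rw [← deviation_snoc_biprod_map_left, ← deviation_map_conj, crIdem_eq_deviation]
  congr 1
  funext i
  induction i using Fin.lastCases <;> simp [biprod.map_eq]

section CrossEffectBifunctor

variable (F : A ⥤ B) [F.PreservesZeroMorphisms]

noncomputable def crossEffectBifunctor : A × A ⥤ B where
  obj P := image (crIdemBiprod F P.1 P.2)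
  map {P P'} fg := image.ι _ ≫ F.map (biprod.map fg.1 fg.2) ≫ factorThruImage _
  map_id P := by
    simp [image_ι_comp_factorThruImage_of_idem (crIdemBiprod_idem F P.1 P.2)]
  map_comp {P Q R} fg fg' := by
    simp only [prod_comp_fst, prod_comp_snd, ← biprod.map_comp_map, F.map_comp,
      Category.assoc, image.fac_assoc, reassoc_of% crIdemBiprod_naturality,
      reassoc_of% image_ι_comp_of_idem (crIdemBiprod_idem F P.1 P.2)]

theorem crossEffectBifunctor_map {X X' Y Y' : A} (f : X ⟶ X') (g : Y ⟶ Y') :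
    (crossEffectBifunctor F).map ((f, g) : (X, Y) ⟶ (X', Y')) = image.ι _ ≫
      (F.map (biprod.map f g) - F.map (biprod.map f 0) - F.map (biprod.map 0 g)) ≫
        factorThruImage _ := by
  rw [← map_biprod_map_comp_crIdemBiprod, Category.assoc,
    comp_factorThruImage_of_idem (crIdemBiprod_idem F X' Y')]
  rfl

noncomputable def objBiprodIso (X Y : A) :
    F.obj (X ⊞ Y) ≅ F.obj X ⊞ (F.obj Y ⊞ image (crIdemBiprod F X Y)) where
  hom := biprod.lift (F.map biprod.fst) (biprod.lift (F.map biprod.snd) (factorThruImage _))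
  inv := biprod.desc (F.map biprod.inl) (biprod.desc (F.map biprod.inr) (image.ι _))
  hom_inv_id := by
    have hl : biprod.fst ≫ biprod.inl = biprod.map (𝟙 X) (0 : Y ⟶ Y) := by simp [biprod.map_eq]
    have hr : biprod.snd ≫ biprod.inr = biprod.map (0 : X ⟶ X) (𝟙 Y) := by simp [biprod.map_eq]
    rw [biprod.lift_desc, biprod.lift_desc, image.fac, ← F.map_comp, ← F.map_comp, hl, hr,
      crIdemBiprod]
    abel
  inv_hom_id := by
    have he := crIdemBiprod_idem F X Y
    have hfac (Z : A) (k : Z ⟶ X ⊞ Y) (hk : F.map k ≫ crIdemBiprod F X Y = 0) :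
        F.map k ≫ factorThruImage (crIdemBiprod F X Y) = 0 := by
      rw [← comp_factorThruImage_of_idem he, reassoc_of% hk, zero_comp]
    ext <;> simp [← F.map_comp, hfac, map_inl_comp_crIdemBiprod, map_inr_comp_crIdemBiprod,
      crIdemBiprod_comp_map_fst, crIdemBiprod_comp_map_snd, comp_factorThruImage_of_idem he]

theorem objBiprodIso_hom_naturality {X X' Y Y' : A} (f : X ⟶ X') (g : Y ⟶ Y') :
    (objBiprodIso F X Y).hom ≫ biprod.map (F.map f) (biprod.map (F.map g)
        (image.ι _ ≫ F.map (biprod.map f g) ≫ factorThruImage _))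
      = F.map (biprod.map f g) ≫ (objBiprodIso F X' Y').hom := by
  ext <;> simp only [objBiprodIso, Category.assoc, biprod.map_fst, biprod.map_snd,
    biprod.lift_fst, biprod.lift_snd, biprod.lift_fst_assoc, biprod.lift_snd_assoc]
  · rw [← F.map_comp, ← F.map_comp, biprod.map_fst]
  · rw [← F.map_comp, ← F.map_comp, biprod.map_snd]
  · rw [image.fac_assoc, ← reassoc_of% crIdemBiprod_naturality F f g,
      comp_factorThruImage_of_idem (crIdemBiprod_idem F X' Y')]

theorem crIdem_curry_crossEffectBifunctor_eq_zero {n : ℕ} (h : ∀ X : Fin (n + 2) → A, crIdem F X = 0)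
    (U : A) (Z : Fin (n + 1) → A) :
    crIdem ((Functor.curry.obj (crossEffectBifunctor F)).obj U) Z = 0 := by
  have hG : crIdem ((Functor.curry.obj (crossEffectBifunctor F)).obj U) Z = image.ι _ ≫
      deviation (fun e => F.map (biprod.map (𝟙 U) e) - F.map (biprod.map (𝟙 U) 0)
        - F.map (biprod.map 0 e)) (fun i => biproduct.π Z i ≫ biproduct.ι Z i) ≫
      factorThruImage _ := by
    rw [crIdem_eq_deviation, ← deviation_comp]
    congr 1
    funext e
    exact crossEffectBifunctor_map F (𝟙 U) e
  rw [hG]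
  simp only [sub_right_comm _ (F.map (biprod.map (𝟙 U) 0)), deviation_sub, deviation_const,
    sub_zero]
  rw [← deviation_sub, ← deviation_snoc_biprod_map_right,
    deviation_map_eq_zero_of_crIdem_eq_zero F h _ ?_]
  · -- the two zeros live in hom types that agree only after unfolding `crossEffectBifunctor`
    rw [zero_comp, comp_zero]
    rfl
  · intro i
    induction i using Fin.lastCases <;> simp [biprod.map_comp_map]

theorem crIdem_curry_swap_crossEffectBifunctor_eq_zero {n : ℕ}
    (h : ∀ X : Fin (n + 2) → A, crIdem F X = 0) (V : A) (Z : Fin (n + 1) → A) :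
    crIdem ((Functor.curry.obj (CategoryTheory.Prod.swap A A ⋙ crossEffectBifunctor F)).obj V)
      Z = 0 := by
  have hG : crIdem
      ((Functor.curry.obj (CategoryTheory.Prod.swap A A ⋙ crossEffectBifunctor F)).obj V) Z =
      image.ι _ ≫ deviation (fun e => F.map (biprod.map e (𝟙 V)) - F.map (biprod.map e 0)
        - F.map (biprod.map 0 (𝟙 V))) (fun i => biproduct.π Z i ≫ biproduct.ι Z i) ≫
      factorThruImage _ := by
    rw [crIdem_eq_deviation, ← deviation_comp]
    congr 1
    funext e
    exact crossEffectBifunctor_map F e (𝟙 V)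
  rw [hG]
  simp only [deviation_sub, deviation_const, sub_zero]
  rw [← deviation_sub, ← deviation_snoc_biprod_map_left,
    deviation_map_eq_zero_of_crIdem_eq_zero F h _ ?_]
  · rw [zero_comp, comp_zero]
    rfl
  · intro i
    induction i using Fin.lastCases <;> simp [biprod.map_comp_map]

end CrossEffectBifunctor

theorem functorDegLE_of_crIdem_eq_zero (d : ℕ) (F : A ⥤ B) (hF : IsZero (F.obj 0))
    (h : ∀ X : Fin (d + 2) → A, crIdem F X = 0) : FunctorDegLE (d + 1) F := by
  induction d generalizing F with
  | zero =>
    have := Functor.preservesZeroMorphisms_of_map_zero_object hF.isoZero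
    intro X Y
    have hc : crIdemBiprod F X Y = deviation
        (fun e => F.map (biprod.map e (𝟙 Y)) - F.map (biprod.map e 0)) ![𝟙 X] := by
      simp [deviation_map_biprod_map_fin_one]
    refine (isIso_biprodComparison'_iff F X Y).2 ?_
    rw [hc, ← deviation_snoc_biprod_map_left]
    refine deviation_map_eq_zero_of_crIdem_eq_zero F h _ fun i => ?_
    induction i using Fin.lastCases <;>
      simp only [Fin.snoc_last, Fin.snoc_castSucc, biprod.map_comp_map] <;> simp
  | succ d ih =>
    have := Functor.preservesZeroMorphisms_of_map_zero_object hF.isoZero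
    refine ⟨crossEffectBifunctor F,
      ⟨objBiprodIso F, fun _ _ _ _ => objBiprodIso_hom_naturality F⟩,
      fun U => ih _ ?_ (crIdem_curry_crossEffectBifunctor_eq_zero F h U),
      fun V => ih _ ?_ (crIdem_curry_swap_crossEffectBifunctor_eq_zero F h V)⟩
    · exact (isZero_image_iff _).2 (crIdemBiprod_zero_right F U)
    · exact (isZero_image_iff _).2 (crIdemBiprod_zero_left F V)

theorem deviation_map_biprod_map_of_iso (F : A ⥤ B) (G : A × A ⥤ B) {Y V : A}
    (iso : F.obj (Y ⊞ V) ≅ F.obj Y ⊞ (F.obj V ⊞ G.obj (Y, V)))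
    (hnat : ∀ (f : Y ⟶ Y) (g : V ⟶ V), iso.hom ≫ biprod.map (F.map f)
      (biprod.map (F.map g) (G.map ((f, g) : (Y, V) ⟶ (Y, V)))) = F.map (biprod.map f g) ≫ iso.hom)
    (g : V ⟶ V) {n : ℕ} (q : Fin n → (Y ⟶ Y)) :
    deviation (fun e => F.map (biprod.map e g)) q = iso.hom ≫
      biprod.map (deviation F.map q) (biprod.map (deviation (fun _ => F.map g) q)
        (deviation (fun e => G.map ((e, g) : (Y, V) ⟶ (Y, V))) q)) ≫ iso.inv := by
  have h (e : Y ⟶ Y) : F.map (biprod.map e g) = iso.hom ≫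
      biprod.map (F.map e) (biprod.map (F.map g) (G.map ((e, g) : (Y, V) ⟶ (Y, V)))) ≫
        iso.inv := by
    rw [reassoc_of% hnat, Iso.hom_inv_id, Category.comp_id]
  simp only [h, deviation_comp, deviation_biprod_map]

theorem deviation_map_biprod_map_sub_eq_zero_of_iso (F : A ⥤ B) (G : A × A ⥤ B) {Y V : A}
    (iso : F.obj (Y ⊞ V) ≅ F.obj Y ⊞ (F.obj V ⊞ G.obj (Y, V)))
    (hnat : ∀ (f : Y ⟶ Y) (g : V ⟶ V), iso.hom ≫ biprod.map (F.map f)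
      (biprod.map (F.map g) (G.map ((f, g) : (Y, V) ⟶ (Y, V)))) = F.map (biprod.map f g) ≫ iso.hom)
    {n : ℕ} (q : Fin (n + 1) → (Y ⟶ Y))
    (hG : deviation (fun e => G.map ((e, 𝟙 V) : (Y, V) ⟶ (Y, V))) q = 0) :
    deviation (fun e => F.map (biprod.map e (𝟙 V)) - F.map (biprod.map e 0)) q = 0 := by
  have hG₀ : deviation (fun e => G.map ((e, 0) : (Y, V) ⟶ (Y, V))) q = 0 := by
    have h (e : Y ⟶ Y) : G.map ((e, 0) : (Y, V) ⟶ (Y, V)) = 𝟙 _ ≫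
        G.map ((e, 𝟙 V) : (Y, V) ⟶ (Y, V)) ≫ G.map ((𝟙 Y, 0) : (Y, V) ⟶ (Y, V)) := by
      rw [Category.id_comp, ← G.map_comp]
      congr 1
      ext <;> simp
    rw [funext h, deviation_comp, hG, zero_comp, comp_zero]
  rw [deviation_sub, deviation_map_biprod_map_of_iso F G iso hnat,
    deviation_map_biprod_map_of_iso F G iso hnat, hG, hG₀, deviation_const, deviation_const,
    sub_self]

theorem crIdem_eq_zero_of_functorDegLE (d : ℕ) (F : A ⥤ B) (h : FunctorDegLE (d + 1) F)
    (X : Fin (d + 2) → A) : crIdem F X = 0 := by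
  induction d generalizing F with
  | zero =>
    obtain ⟨u, v, hX⟩ := exists_crIdem_eq_comp_deviation F X
    have := preservesZeroMorphisms_of_isIso_biprodComparison' F h
    rw [hX, deviation_map_biprod_map_fin_one, (isIso_biprodComparison'_iff F _ _).1 (h _ _),
      comp_zero, zero_comp, comp_zero]
  | succ d ih =>
    obtain ⟨G, ⟨iso, hnat⟩, -, hG⟩ := h
    obtain ⟨u, v, hX⟩ := exists_crIdem_eq_comp_deviation F X
    rw [hX, deviation_map_biprod_map_sub_eq_zero_of_iso F G (iso _ _) (hnat _ _ _ _) _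
      (ih _ (hG _) _), zero_comp, comp_zero]

/-- for `d ≥ 1`, the `(d+1)`-st cross effect of `F` vanishes if and only if
`F` is of degree `≤ d` in the recursive sense: either `d = 1` and `F` is additive, or
`d > 1` and there is a functor `G` of degree `≤ d − 1` in each argument with a natural
decomposition `F(X ⊕ Y) ≅ F(X) ⊕ F(Y) ⊕ G(X,Y)`. -/
theorem cross_effect_vanishing_iff_degree_le
    (F : A ⥤ B) (hF : IsZero (F.obj (0 : A))) (d : ℕ) (hd : 1 ≤ d) :
    (∀ X : Fin (d + 1) → A, IsZero (crossEffect F X)) ↔ FunctorDegLE d F := by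
  obtain ⟨d, rfl⟩ := Nat.exists_eq_add_of_le' hd
  simp only [crossEffect, isZero_image_iff]
  exact ⟨functorDegLE_of_crIdem_eq_zero d F hF, crIdem_eq_zero_of_functorDegLE d F⟩
end
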